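/- Assume Q has a unique source s, condition (b) holds, and the vertex n-1 = s. Then τ^{-r} induces a bijection (indeed quiver isomorphism) from lk_p(P(s)) to lk_p(τ^{-r}P(s)); combinatorially, (r_i) ↦ (r_i + r) is an isomorphism of posets from {(r_i) ∈ L(Q) : r_s = 0} onto {(r_i) ∈ L(Q) : r_s = r}. -/

import Mathlib

/-! Combinatorics of quivers: walks in the double quiver, the function `l_Q`,
paths, acyclicity, condition (b), unique sources, and the set `L(Q)`.
A quiver on a vertex type `V` is encoded by its family of arrow types
`H : V → V → Type`. -/

/-- Walks in the double quiver `Q̃` of the quiver `Q` encoded by `H`: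
a step may traverse an arrow forwards (`fwd`) or backwards (`bwd`). -/
inductive DWalk {V : Type} (H : V → V → Type) : V → V → Type where
  | nil : (a : V) → DWalk H a a
  | fwd : {a b c : V} → DWalk H a b → H b c → DWalk H a c
  | bwd : {a b c : V} → DWalk H a b → H c b → DWalk H a c

/-- `c⁺(w)`: the number of forward (original) arrows used by a walk in `Q̃`. -/
def DWalk.cplus {V : Type} {H : V → V → Type} : {a b : V} → DWalk H a b → ℕ
  | _, _, .nil _ => 0
  | _, _, .fwd w _ => DWalk.cplus w + 1
  | _, _, .bwd w _ => DWalk.cplus w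

/-- `l_Q(i,j)`: the minimal number of forward arrows over all walks from `i`
to `j` in the double quiver `Q̃`.  (In particular `l_Q(i,i) = 0`.) -/
noncomputable def ell {V : Type} (H : V → V → Type) (i j : V) : ℕ :=
  sInf {m | ∃ w : DWalk H i j, DWalk.cplus w = m}

/-- Directed paths in the quiver `Q` itself. -/
inductive QPath {V : Type} (H : V → V → Type) : V → V → Type where
  | nil : (a : V) → QPath H a a
  | cons : {a b c : V} → QPath H a b → H b c → QPath H a c

def QPath.length {V : Type} {H : V → V → Type} : {a b : V} → QPath H a b → ℕ
  | _, _, .nil _ => 0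
  | _, _, .cons p _ => QPath.length p + 1

/-- `Q` has no loops and no (nontrivial, directed) cycles. -/
def QuiverAcyclic {V : Type} (H : V → V → Type) : Prop :=
  ∀ (a : V) (p : QPath H a a), QPath.length p = 0

/-- `Q` is connected (any two vertices are joined by a walk in `Q̃`). -/
def QuiverConnected {V : Type} (H : V → V → Type) : Prop :=
  ∀ a b : V, Nonempty (DWalk H a b)

/-- Condition (b): for every vertex `x`, `#s(x) + #t(x) > 1`. -/
def CondB {V : Type} (H : V → V → Type) [Fintype V] [∀ a b, Fintype (H a b)] : Prop :=
  ∀ x : V, 1 < ∑ y : V, (Fintype.card (H x y) + Fintype.card (H y x))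

/-- `s` is the unique source (vertex with no incoming arrows) of `Q`. -/
def UniqueSource {V : Type} (H : V → V → Type) (s : V) : Prop :=
  (∀ y : V, IsEmpty (H y s)) ∧ ∀ t : V, (∀ y : V, IsEmpty (H y t)) → t = s

/-- The set `L(Q) = {(r_i) ∈ ℤ_{≥0}^{Q₀} ∣ r_j ≤ r_i + l_Q(i,j) for all i,j}`. -/
def LSet {V : Type} (H : V → V → Type) : Set (V → ℕ) :=
  {r | ∀ i j : V, r j ≤ r i + ell H i j}


/-- Assume the finite connected acyclic quiver `Q` has a
unique source `s` and satisfies condition (b).  Then `τ^{-t}` induces a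
bijection (indeed a quiver isomorphism) `lk_p(P(s)) ≅ lk_p(τ^{-t}P(s))`;
combinatorially, the shift `(r_i) ↦ (r_i + t)` is an isomorphism of posets from
`{(r_i) ∈ L(Q) : r_s = 0}` onto `{(r_i) ∈ L(Q) : r_s = t}`. -/
def DWalk.append {V : Type} {H : V → V → Type} : {a b c : V} → DWalk H a b → DWalk H b c → DWalk H a c
  | _, _, _, w, .nil _ => w
  | _, _, _, w, .fwd w' h => .fwd (w.append w') h
  | _, _, _, w, .bwd w' h => .bwd (w.append w') h

theorem DWalk.cplus_append {V : Type} {H : V → V → Type} {a b c : V}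
    (w : DWalk H a b) (w' : DWalk H b c) :
    (w.append w').cplus = w.cplus + w'.cplus := by
  induction w' with
  | nil => simp [DWalk.append, DWalk.cplus]
  | fwd w' h ih => simp [DWalk.append, DWalk.cplus, ih]; omega
  | bwd w' h ih => simp [DWalk.append, DWalk.cplus, ih]

/-- TransGen of the arrow relation gives a positive-length path. -/
theorem qpath_of_transGen {V : Type} {H : V → V → Type} {a b : V}
    (h : Relation.TransGen (fun x y => Nonempty (H x y)) a b) :
    ∃ p : QPath H a b, 0 < p.length := by
  induction h with
  | single h => obtain ⟨e⟩ := h; exact ⟨.cons (.nil _) e, by simp [QPath.length]⟩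
  | tail _ h ih =>
    obtain ⟨e⟩ := h
    obtain ⟨p, hp⟩ := ih
    exact ⟨.cons p e, by simp [QPath.length]⟩

theorem ell_to_source {V : Type} [Fintype V] (H : V → V → Type)
    (hacyc : QuiverAcyclic H) (s : V) (hs : UniqueSource H s) (x : V) :
    ell H x s = 0 := by
  have hwf : WellFounded (fun x y => Nonempty (H x y)) := by
    haveI : IsIrrefl V (Relation.TransGen (fun x y => Nonempty (H x y))) := by
      constructor
      intro a h
      obtain ⟨p, hp⟩ := qpath_of_transGen h
      have := hacyc a p
      omega
    have : WellFounded (Relation.TransGen (fun x y : V => Nonempty (H x y))) :=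
      Finite.wellFounded_of_trans_of_irrefl _
    exact Subrelation.wf (fun h => Relation.TransGen.single h) this
  have key : ∀ x : V, ∃ w : DWalk H x s, w.cplus = 0 := by
    intro x
    induction x using hwf.induction with
    | _ x ih =>
      by_cases hxs : x = s
      · subst hxs; exact ⟨.nil _, by simp [DWalk.cplus]⟩
      · have : ¬ ∀ y : V, IsEmpty (H y x) := fun h => hxs (hs.2 x h)
        push_neg at this
        obtain ⟨y, hy⟩ := this
        obtain ⟨e⟩ := hy
        obtain ⟨w, hw⟩ := ih y ⟨e⟩
        refine ⟨DWalk.append (.bwd (.nil x) e) w, ?_⟩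
        rw [DWalk.cplus_append, hw]
        simp [DWalk.cplus]
  obtain ⟨w, hw⟩ := key x
  exact Nat.eq_zero_of_le_zero (Nat.sInf_le ⟨w, hw⟩)

theorem shift_iso_lk {V : Type} [Fintype V]
    (H : V → V → Type) [∀ a b, Fintype (H a b)]
    (hacyc : QuiverAcyclic H) (hconn : QuiverConnected H) (hb : CondB H)
    (s : V) (hs : UniqueSource H s) (t : ℕ) :
    (∀ r ∈ LSet H, r s = 0 →
        (fun i => r i + t) ∈ LSet H ∧ (fun i => r i + t) s = t) ∧
    (∀ r' ∈ LSet H, r' s = t →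
        ∃ r ∈ LSet H, r s = 0 ∧ r' = fun i => r i + t) ∧
    (∀ r q : V → ℕ, (∀ i, r i ≤ q i) ↔ ∀ i, r i + t ≤ q i + t) := by
  have hell : ∀ x : V, ell H x s = 0 := ell_to_source H hacyc s hs
  refine ⟨?_, ?_, ?_⟩
  · intro r hr hrs
    refine ⟨fun i j => ?_, by show r s + t = t; omega⟩
    show r j + t ≤ r i + t + ell H i j
    have := hr i j; omega
  · intro r' hr' hrs
    have hlb : ∀ i, t ≤ r' i := fun i => by
      have := hr' i s; rw [hell i] at this; omega
    refine ⟨fun i => r' i - t, fun i j => ?_, ?_, ?_⟩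
    · show r' j - t ≤ r' i - t + ell H i j
      have := hr' i j; have := hlb i; have := hlb j; omega
    · show r' s - t = 0
      omega
    · funext i; show r' i = r' i - t + t
      have := hlb i; omega
  · intro r q
    constructor <;> intro h i <;> have := h i <;> omega
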